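/- Sampling complexity lower bound: For each n < m with n dividing m, let A be the m×n matrix with A_{ij} = √(n/m) if j = ⌈(n/m)·i⌉ and 0 otherwise. Then A has orthonormal columns, ‖A‖₂ = 1, ‖A‖_F = √n, and if d rows of A are sampled independently and uniformly with d < (1/10) n log n, then with probability bounded away from 0, the sampled submatrix à has a zero column, and hence ‖A − A P_n‖₂ ≥ 1 for P_n the projection onto the span of all right singular vectors of Ã, while σ_{n+1}(A) = 0. -/

import Mathlib

open scoped Classical
noncomputable section

/-- Spectral (ℓ₂→ℓ₂ operator) norm of a real matrix. -/
def spec {m n : ℕ} (A : Matrix (Fin m) (Fin n) ℝ) : ℝ :=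
  ‖LinearMap.toContinuousLinearMap (Matrix.toEuclideanLin A)‖

/-- Frobenius norm. -/
def frob {m n : ℕ} (A : Matrix (Fin m) (Fin n) ℝ) : ℝ :=
  Real.sqrt (∑ i, ∑ j, (A i j) ^ 2)

/-- k-th largest value (0-indexed) of a finite family, 0 beyond range. -/
def kthVal {n : ℕ} (f : Fin n → ℝ) (k : ℕ) : ℝ :=
  ((List.ofFn f).insertionSort (fun a b => b ≤ a)).getD k 0

theorem Matrix.isHermitian_transpose_mul_self {m n : ℕ} (A : Matrix (Fin m) (Fin n) ℝ) :
    (A.transpose * A).IsHermitian := by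
  simpa [Matrix.conjTranspose_eq_transpose_of_trivial] using
    Matrix.isHermitian_conjTranspose_mul_self A

/-- (k+1)-st largest singular value (0-indexed k). -/
def singVal {m n : ℕ} (A : Matrix (Fin m) (Fin n) ℝ) (k : ℕ) : ℝ :=
  Real.sqrt (kthVal (Matrix.isHermitian_transpose_mul_self A).eigenvalues k)

/-- The lower-bound example: the `m × n` matrix with
`A_{ij} = √(n/m) δ_{⌈(n/m)i⌉, j}` (1-indexed). -/
def lowerMatrix (m n : ℕ) : Matrix (Fin m) (Fin n) ℝ :=
  Matrix.of fun i j =>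
    if (j : ℕ) + 1 = ⌈((n : ℝ) / m) * ((i : ℕ) + 1)⌉₊ then Real.sqrt ((n : ℝ) / m)
    else 0

lemma ceil_div_aux {k : ℕ} (hk : 0 < k) (i : ℕ) :
    ⌈((i : ℝ) + 1) / k⌉₊ = i / k + 1 := by
  have hk' : (0 : ℝ) < k := by exact_mod_cast hk
  rw [Nat.ceil_eq_iff (Nat.succ_ne_zero _)]
  have h1 : i / k * k ≤ i := Nat.div_mul_le_self i k
  have h2 : i < i / k * k + k := Nat.lt_div_mul_add hk
  constructor
  · rw [lt_div_iff₀ hk']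
    push_cast
    have : ((i / k : ℕ) : ℝ) * k ≤ (i : ℝ) := by exact_mod_cast h1
    linarith
  · rw [div_le_iff₀ hk']
    push_cast
    have h2' : (i : ℝ) + 1 ≤ ((i / k : ℕ) : ℝ) * k + k := by
      exact_mod_cast Nat.succ_le_of_lt h2
    nlinarith [h2']

lemma entry_eq {m n k : ℕ} (hn : 0 < n) (hk : 0 < k) (hm : m = n * k) (i : Fin m) (j : Fin n) :
    lowerMatrix m n i j = if (j : ℕ) = (i : ℕ) / k then Real.sqrt (1 / k) else 0 := by
  have hk' : (0 : ℝ) < k := by exact_mod_cast hk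
  have hn' : (0 : ℝ) < n := by exact_mod_cast hn
  have hq : (n : ℝ) / m = 1 / k := by
    subst hm; rw [Nat.cast_mul]; field_simp
  have harg : ((n : ℝ) / m) * ((i : ℕ) + 1) = ((i : ℕ) + 1) / k := by
    rw [hq]; ring
  unfold lowerMatrix
  simp only [Matrix.of_apply]
  rw [harg, ceil_div_aux hk, hq]
  congr 1
  simp only [eq_iff_iff]
  omega

end

section More
open Finset

lemma fiber_eq {n k : ℕ} (hk : 0 < k) {j : ℕ} (hj : j < n) :
    (Finset.range (n*k)).filter (fun i => j = i / k) = Finset.Ico (j*k) (j*k+k) := by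
  ext a
  simp only [Finset.mem_filter, Finset.mem_range, Finset.mem_Ico]
  constructor
  · rintro ⟨ha, rfl⟩
    exact ⟨Nat.div_mul_le_self a k, Nat.lt_div_mul_add hk⟩
  · rintro ⟨h1, h2⟩
    have h3 : a / k = j := Nat.div_eq_of_lt_le h1 (by rw [add_mul, one_mul]; omega)
    refine ⟨?_, h3.symm⟩
    have : j + 1 ≤ n := hj
    calc a < j*k+k := h2
      _ = (j+1)*k := by ring
      _ ≤ n*k := Nat.mul_le_mul_right k this

lemma fiber_sum {n k : ℕ} (hk : 0 < k) {j : ℕ} (hj : j < n) (v : ℝ) :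
    (∑ i ∈ Finset.range (n*k), if j = i / k then v else 0) = k * v := by
  rw [← Finset.sum_filter, fiber_eq hk hj, Finset.sum_const, Nat.card_Ico]
  simp [nsmul_eq_mul]

lemma ortho {m n k : ℕ} (hn : 0 < n) (hk : 0 < k) (hm : m = n * k) :
    (lowerMatrix m n).transpose * lowerMatrix m n = 1 := by
  have hk' : (0 : ℝ) < k := by exact_mod_cast hk
  ext j j'
  rw [Matrix.mul_apply]
  simp only [Matrix.transpose_apply, entry_eq hn hk hm]
  by_cases h : j = j'
  · subst h
    have hterm : ∀ i : Fin m,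
        (if (j:ℕ) = (i:ℕ)/k then Real.sqrt (1/k) else 0) *
        (if (j:ℕ) = (i:ℕ)/k then Real.sqrt (1/k) else 0)
        = if (j:ℕ) = (i:ℕ)/k then (1/k : ℝ) else 0 := by
      intro i
      split
      · exact Real.mul_self_sqrt (by positivity)
      · simp
    simp only [hterm]
    rw [Fin.sum_univ_eq_sum_range (fun i => if (j:ℕ) = i/k then (1/k : ℝ) else 0) m, hm,
      fiber_sum hk j.isLt]
    rw [Matrix.one_apply_eq]
    field_simp
  · have hterm : ∀ i : Fin m,
        (if (j:ℕ) = (i:ℕ)/k then Real.sqrt (1/k) else 0) *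
        (if (j':ℕ) = (i:ℕ)/k then Real.sqrt (1/k) else 0) = 0 := by
      intro i
      split
      · split
        · exfalso; apply h; apply Fin.ext; omega
        · exact mul_zero _
      · exact zero_mul _
    simp only [hterm, Finset.sum_const_zero]
    rw [Matrix.one_apply_ne h]

lemma frob_eq {m n k : ℕ} (hn : 0 < n) (hk : 0 < k) (hm : m = n * k) :
    frob (lowerMatrix m n) = Real.sqrt n := by
  have hk' : (0 : ℝ) < k := by exact_mod_cast hk
  unfold frob
  congr 1
  have hrow : ∀ i : Fin m, (∑ j : Fin n, (lowerMatrix m n i j)^2) = 1/k := by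
    intro i
    simp only [entry_eq hn hk hm]
    have hlt : (i:ℕ)/k < n := by
      apply Nat.div_lt_of_lt_mul; rw [mul_comm]; rw [← hm]; exact i.isLt
    rw [Fin.sum_univ_eq_sum_range (fun j => (if j = (i:ℕ)/k then Real.sqrt (1/k) else 0)^2) n]
    have : ∀ j, ((if j = (i:ℕ)/k then Real.sqrt (1/k) else 0)^2 : ℝ)
        = if j = (i:ℕ)/k then (1/k:ℝ) else 0 := by
      intro j
      split
      · exact Real.sq_sqrt (by positivity)
      · simp
    simp only [this]
    rw [Finset.sum_ite_eq' (Finset.range n) ((i:ℕ)/k) (fun _ => (1/k:ℝ))]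
    simp [hlt]
  rw [Finset.sum_congr rfl (fun i _ => hrow i), Finset.sum_const]
  simp only [Finset.card_univ, Fintype.card_fin, nsmul_eq_mul, hm]
  push_cast
  field_simp

end More

section Spec

lemma singVal_n {m n : ℕ} (A : Matrix (Fin m) (Fin n) ℝ) : singVal A n = 0 := by
  unfold singVal kthVal
  rw [List.getD_eq_default, Real.sqrt_zero]
  rw [List.length_insertionSort, List.length_ofFn]

lemma isometry_of_ortho {m n : ℕ} {A : Matrix (Fin m) (Fin n) ℝ}
    (h : A.transpose * A = 1) (x : EuclideanSpace ℝ (Fin n)) :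
    ‖Matrix.toEuclideanLin A x‖ = ‖x‖ := by
  rw [Matrix.toEuclideanLin_apply, EuclideanSpace.norm_eq, EuclideanSpace.norm_eq]
  congr 1
  set v := x.ofLp with hv
  have key : dotProduct (A.mulVec v) (A.mulVec v) = dotProduct v v := by
    rw [Matrix.dotProduct_mulVec, ← Matrix.mulVec_transpose, Matrix.mulVec_mulVec, h,
      Matrix.one_mulVec]
  have h1 : (∑ i, ‖(WithLp.toLp 2 (A.mulVec v)).ofLp i‖^2)
      = dotProduct (A.mulVec v) (A.mulVec v) := by
    simp [dotProduct, Real.norm_eq_abs, sq_abs, pow_two]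
  have h2 : (∑ i, ‖x i‖^2) = dotProduct v v := by
    simp only [Real.norm_eq_abs, sq_abs]
    simp only [dotProduct, pow_two]
    rfl
  rw [h1, h2, key]

lemma spec_one {m n : ℕ} (hn : 0 < n) {A : Matrix (Fin m) (Fin n) ℝ}
    (h : A.transpose * A = 1) : spec A = 1 := by
  unfold spec
  apply le_antisymm
  · apply ContinuousLinearMap.opNorm_le_bound _ zero_le_one
    intro x
    simp only [LinearMap.coe_toContinuousLinearMap']
    rw [one_mul, isometry_of_ortho h]
  · set T := LinearMap.toContinuousLinearMap (Matrix.toEuclideanLin A) with hT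
    have hb := ContinuousLinearMap.unit_le_opNorm T
      (EuclideanSpace.single (⟨0, hn⟩ : Fin n) (1:ℝ))
      (by rw [EuclideanSpace.norm_single, norm_one])
    have h1 : ‖T (EuclideanSpace.single (⟨0, hn⟩ : Fin n) (1:ℝ))‖ = 1 := by
      rw [hT]
      simp only [LinearMap.coe_toContinuousLinearMap']
      rw [isometry_of_ortho h, EuclideanSpace.norm_single, norm_one]
    rw [h1] at hb
    exact hb

lemma spec_lb {m n : ℕ} {A : Matrix (Fin m) (Fin n) ℝ} (h : A.transpose * A = 1)
    (j₀ : Fin n) (P : Matrix (Fin n) (Fin n) ℝ) (hP : P.mulVec (Pi.single j₀ 1) = 0) :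
    1 ≤ spec (A - A * P) := by
  have hmv : (A - A * P).mulVec (Pi.single j₀ 1) = A.mulVec (Pi.single j₀ 1) := by
    rw [Matrix.sub_mulVec, ← Matrix.mulVec_mulVec, hP, Matrix.mulVec_zero, sub_zero]
  have hx : ((EuclideanSpace.single j₀ (1:ℝ)).ofLp)
      = Pi.single j₀ 1 := rfl
  have heq : Matrix.toEuclideanLin (A - A*P) (EuclideanSpace.single j₀ (1:ℝ))
      = Matrix.toEuclideanLin A (EuclideanSpace.single j₀ (1:ℝ)) := by
    rw [Matrix.toEuclideanLin_apply, Matrix.toEuclideanLin_apply, hx, hmv]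
  set T := LinearMap.toContinuousLinearMap (Matrix.toEuclideanLin (A - A*P)) with hT
  have hb := ContinuousLinearMap.unit_le_opNorm T (EuclideanSpace.single j₀ (1:ℝ))
    (by rw [EuclideanSpace.norm_single, norm_one])
  have h1 : ‖T (EuclideanSpace.single j₀ (1:ℝ))‖ = 1 := by
    rw [hT]
    simp only [LinearMap.coe_toContinuousLinearMap']
    rw [heq, isometry_of_ortho h, EuclideanSpace.norm_single, norm_one]
  rw [h1] at hb
  unfold spec
  exact hb

end Spec

section Counting
open Finset

lemma zero_iff {m n k : ℕ} (hn : 0 < n) (hk : 0 < k) (hm : m = n * k) (r : Fin m) (j : Fin n) :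
    lowerMatrix m n r j = 0 ↔ ¬ ((j:ℕ) = (r:ℕ)/k) := by
  rw [entry_eq hn hk hm]
  have hs : Real.sqrt (1/k) ≠ 0 := by
    have hk' : (0:ℝ) < k := by exact_mod_cast hk
    positivity
  split <;> simp_all

lemma count_fun {m d : ℕ} (T : Finset (Fin m)) :
    (Finset.univ.filter (fun f : Fin d → Fin m => ∀ i, f i ∈ T)).card = T.card ^ d := by
  have h : (Finset.univ.filter (fun f : Fin d → Fin m => ∀ i, f i ∈ T))
      = Fintype.piFinset (fun _ : Fin d => T) := by
    ext f; simp [Fintype.mem_piFinset]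
  rw [h, Fintype.card_piFinset]
  simp

lemma fiber_card_fin {m n k : ℕ} (hk : 0 < k) (hm : m = n * k) (j : Fin n) :
    (Finset.univ.filter (fun r : Fin m => (j:ℕ) = (r:ℕ)/k)).card = k := by
  rw [Finset.card_filter]
  rw [Fin.sum_univ_eq_sum_range (fun r => if (j:ℕ) = r/k then 1 else 0) m]
  rw [← Finset.card_filter, hm, fiber_eq hk j.isLt, Nat.card_Ico]
  omega

lemma card_T_one {m n k : ℕ} (hn : 0 < n) (hk : 0 < k) (hm : m = n * k) (j : Fin n) :
    (Finset.univ.filter (fun r : Fin m => lowerMatrix m n r j = 0)).card = m - k := by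
  have h : (Finset.univ.filter (fun r : Fin m => lowerMatrix m n r j = 0))
      = Finset.univ.filter (fun r : Fin m => ¬ ((j:ℕ) = (r:ℕ)/k)) :=
    Finset.filter_congr (fun r _ => zero_iff hn hk hm r j)
  have h2 := Finset.card_filter_add_card_filter_not
    (s := (Finset.univ : Finset (Fin m))) (fun r : Fin m => (j:ℕ) = (r:ℕ)/k)
  rw [fiber_card_fin hk hm] at h2
  rw [h]
  simp only [Finset.card_univ, Fintype.card_fin] at h2
  omega

lemma card_T_two {m n k : ℕ} (hn : 0 < n) (hk : 0 < k) (hm : m = n * k)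
    {j j' : Fin n} (hjj : j ≠ j') :
    (Finset.univ.filter
      (fun r : Fin m => lowerMatrix m n r j = 0 ∧ lowerMatrix m n r j' = 0)).card = m - 2*k := by
  have h : (Finset.univ.filter
      (fun r : Fin m => lowerMatrix m n r j = 0 ∧ lowerMatrix m n r j' = 0))
      = Finset.univ.filter (fun r : Fin m => ¬ ((j:ℕ) = (r:ℕ)/k ∨ (j':ℕ) = (r:ℕ)/k)) := by
    refine Finset.filter_congr (fun r _ => ?_)
    rw [zero_iff hn hk hm, zero_iff hn hk hm]
    tauto
  have hdisj : Disjoint (Finset.univ.filter (fun r : Fin m => (j:ℕ) = (r:ℕ)/k))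
      (Finset.univ.filter (fun r : Fin m => (j':ℕ) = (r:ℕ)/k)) := by
    rw [Finset.disjoint_filter]
    intro r _ h1 h2
    exact hjj (Fin.ext (by omega))
  have hunion : (Finset.univ.filter (fun r : Fin m => (j:ℕ) = (r:ℕ)/k ∨ (j':ℕ) = (r:ℕ)/k))
      = (Finset.univ.filter (fun r : Fin m => (j:ℕ) = (r:ℕ)/k))
        ∪ (Finset.univ.filter (fun r : Fin m => (j':ℕ) = (r:ℕ)/k)) := by
    ext r; simp [Finset.mem_filter]
  have hcard : (Finset.univ.filter
      (fun r : Fin m => (j:ℕ) = (r:ℕ)/k ∨ (j':ℕ) = (r:ℕ)/k)).card = 2*k := by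
    rw [hunion, Finset.card_union_of_disjoint hdisj, fiber_card_fin hk hm,
      fiber_card_fin hk hm]
    ring
  have h2 := Finset.card_filter_add_card_filter_not
    (s := (Finset.univ : Finset (Fin m)))
    (fun r : Fin m => (j:ℕ) = (r:ℕ)/k ∨ (j':ℕ) = (r:ℕ)/k)
  rw [hcard] at h2
  simp only [Finset.card_univ, Fintype.card_fin] at h2
  rw [h]
  omega

end Counting

section Moments
open Finset

lemma sum_X {m n k d : ℕ} (hn : 0 < n) (hk : 0 < k) (hm : m = n * k) :
    (∑ f : Fin d → Fin m,
      (Finset.univ.filter (fun j : Fin n => ∀ i, lowerMatrix m n (f i) j = 0)).card)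
      = n * (m - k)^d := by
  simp_rw [Finset.card_filter]
  rw [Finset.sum_comm]
  have hj : ∀ j : Fin n,
      (∑ f : Fin d → Fin m, if (∀ i, lowerMatrix m n (f i) j = 0) then 1 else 0)
      = (m - k)^d := by
    intro j
    rw [← Finset.card_filter]
    have h : (Finset.univ.filter (fun f : Fin d → Fin m => ∀ i, lowerMatrix m n (f i) j = 0))
        = Finset.univ.filter (fun f : Fin d → Fin m =>
            ∀ i, f i ∈ Finset.univ.filter (fun r : Fin m => lowerMatrix m n r j = 0)) := by
      apply Finset.filter_congr
      intro f _
      simp [Finset.mem_filter]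
    rw [h, count_fun, card_T_one hn hk hm]
  rw [Finset.sum_congr rfl (fun j _ => hj j), Finset.sum_const]
  simp [mul_comm]

lemma sum_X_sq {m n k d : ℕ} (hn : 0 < n) (hk : 0 < k) (hm : m = n * k) :
    (∑ f : Fin d → Fin m,
      ((Finset.univ.filter (fun j : Fin n => ∀ i, lowerMatrix m n (f i) j = 0)).card)^2)
      = n * ((m - k)^d + (n-1) * (m - 2*k)^d) := by
  have expand : ∀ f : Fin d → Fin m,
      ((Finset.univ.filter (fun j : Fin n => ∀ i, lowerMatrix m n (f i) j = 0)).card)^2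
      = ∑ j : Fin n, ∑ j' : Fin n,
          if ((∀ i, lowerMatrix m n (f i) j = 0) ∧ (∀ i, lowerMatrix m n (f i) j' = 0))
          then 1 else 0 := by
    intro f
    rw [Finset.card_filter, pow_two, Finset.sum_mul_sum]
    apply Finset.sum_congr rfl; intro j _
    apply Finset.sum_congr rfl; intro j' _
    by_cases h1 : ∀ i, lowerMatrix m n (f i) j = 0 <;>
      by_cases h2 : ∀ i, lowerMatrix m n (f i) j' = 0 <;> simp [h1, h2]
  simp_rw [expand]
  rw [Finset.sum_comm]
  have inner : ∀ j : Fin n, (∑ f : Fin d → Fin m, ∑ j' : Fin n,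
      if ((∀ i, lowerMatrix m n (f i) j = 0) ∧ (∀ i, lowerMatrix m n (f i) j' = 0))
      then 1 else 0) = (m-k)^d + (n-1) * (m - 2*k)^d := by
    intro j
    rw [Finset.sum_comm]
    have hjj' : ∀ j' : Fin n, (∑ f : Fin d → Fin m,
        if ((∀ i, lowerMatrix m n (f i) j = 0) ∧ (∀ i, lowerMatrix m n (f i) j' = 0))
        then 1 else 0)
        = if j' = j then (m-k)^d else (m - 2*k)^d := by
      intro j'
      rw [← Finset.card_filter]
      have h : (Finset.univ.filter (fun f : Fin d → Fin m =>
          (∀ i, lowerMatrix m n (f i) j = 0) ∧ (∀ i, lowerMatrix m n (f i) j' = 0)))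
          = Finset.univ.filter (fun f : Fin d → Fin m =>
              ∀ i, f i ∈ (Finset.univ.filter (fun r : Fin m =>
                lowerMatrix m n r j = 0 ∧ lowerMatrix m n r j' = 0))) := by
        apply Finset.filter_congr
        intro f _
        rw [← forall_and]
        constructor <;> intro hh i <;> have := hh i <;> simp [Finset.mem_filter] at * <;> tauto
      rw [h, count_fun]
      by_cases hjj : j' = j
      · subst hjj
        have : (Finset.univ.filter (fun r : Fin m =>
            lowerMatrix m n r j' = 0 ∧ lowerMatrix m n r j' = 0))
            = Finset.univ.filter (fun r : Fin m => lowerMatrix m n r j' = 0) := by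
          apply Finset.filter_congr; intro r _; tauto
        rw [this, card_T_one hn hk hm, if_pos rfl]
      · rw [card_T_two hn hk hm (fun hh => hjj hh.symm), if_neg hjj]
    rw [Finset.sum_congr rfl (fun j' _ => hjj' j')]
    rw [← Finset.add_sum_erase _ _ (Finset.mem_univ j), if_pos rfl]
    have herase : ∀ j' ∈ Finset.univ.erase j,
        (if j' = j then (m-k)^d else (m - 2*k)^d) = (m - 2*k)^d := by
      intro j' hj'
      rw [if_neg (Finset.ne_of_mem_erase hj')]
    rw [Finset.sum_congr rfl herase, Finset.sum_const, Finset.card_erase_of_mem (Finset.mem_univ j)]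
    simp [Finset.card_univ]
  rw [Finset.sum_congr rfl (fun j _ => inner j), Finset.sum_const]
  simp [mul_comm]

end Moments

section Prob
open Finset

lemma arith_main (N K Ecard : ℝ) (d : ℕ) (hN3 : 3 ≤ N) (hK0 : 0 < K) (hE0 : 0 ≤ Ecard)
    (hd : (d:ℝ) < 1/10 * N * Real.log N)
    (hCS : (N * ((N-1)*K)^d)^2 ≤ N * (((N-1)*K)^d + (N-1) * ((N-2)*K)^d) * Ecard) :
    1/2 ≤ Ecard / (N*K)^d := by
  have hN2 : (0:ℝ) < N - 2 := by linarith
  have hN1 : (0:ℝ) < N - 1 := by linarith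
  have hN0 : (0:ℝ) < N := by linarith
  set A : ℝ := ((N-1)*K)^d with hAdef
  set B : ℝ := ((N-2)*K)^d with hBdef
  set M : ℝ := (N*K)^d with hMdef
  have hA0 : 0 < A := by rw [hAdef]; positivity
  have hB0 : 0 ≤ B := by rw [hBdef]; positivity
  have hM0 : 0 < M := by rw [hMdef]; positivity
  -- A ≤ N * B
  have hlog : A ≤ N * B := by
    have h1 : N - 1 ≤ (N - 2) * Real.exp (1/(N-2)) := by
      have h := Real.add_one_le_exp (1/(N-2))
      have h2 : (N-2) * (1/(N-2) + 1) = N - 1 := by field_simp; ring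
      nlinarith
    have h2 : (N-1)^d ≤ ((N - 2) * Real.exp (1/(N-2)))^d :=
      pow_le_pow_left₀ (by linarith) h1 d
    have h3 : ((N - 2) * Real.exp (1/(N-2)))^d
        = (N-2)^d * Real.exp ((d:ℝ) * (1/(N-2))) := by
      rw [mul_pow, Real.exp_nat_mul]
    have h4 : Real.exp ((d:ℝ) * (1/(N-2))) ≤ N := by
      have hlogN : 0 ≤ Real.log N := Real.log_nonneg (by linarith)
      have hdle : (d:ℝ) * (1/(N-2)) ≤ Real.log N := by
        rw [mul_one_div, div_le_iff₀ hN2]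
        nlinarith [mul_nonneg hlogN (by linarith : (0:ℝ) ≤ N - 2 - N/10)]
      calc Real.exp ((d:ℝ) * (1/(N-2))) ≤ Real.exp (Real.log N) :=
            Real.exp_le_exp.mpr hdle
        _ = N := Real.exp_log (by linarith)
    have h5 : (N-1)^d ≤ N * (N-2)^d := by
      calc (N-1)^d ≤ (N-2)^d * Real.exp ((d:ℝ) * (1/(N-2))) := by rw [← h3]; exact h2
        _ ≤ (N-2)^d * N := mul_le_mul_of_nonneg_left h4 (by positivity)
        _ = N * (N-2)^d := by ring
    calc A = (N-1)^d * K^d := by rw [hAdef, mul_pow]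
      _ ≤ (N * (N-2)^d) * K^d := mul_le_mul_of_nonneg_right h5 (by positivity)
      _ = N * ((N-2)*K)^d := by rw [mul_pow]; ring
      _ = N * B := by rw [hBdef]
  -- M * B ≤ A^2
  have hab : M * B ≤ A^2 := by
    have h1 : (N*K) * ((N-2)*K) ≤ ((N-1)*K)^2 := by nlinarith
    calc M * B = ((N*K) * ((N-2)*K))^d := by rw [hMdef, hBdef, ← mul_pow]
      _ ≤ (((N-1)*K)^2)^d := pow_le_pow_left₀ (by positivity) h1 d
      _ = A^2 := by rw [hAdef, ← pow_mul, ← pow_mul, Nat.mul_comm]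
  have e1 : M * A ≤ N * A^2 := by
    calc M * A ≤ M * (N * B) := mul_le_mul_of_nonneg_left hlog hM0.le
      _ = N * (M * B) := by ring
      _ ≤ N * A^2 := mul_le_mul_of_nonneg_left hab (by positivity)
  have hkey : M * (N * (A + (N-1) * B)) ≤ 2 * (N * A)^2 := by
    nlinarith [mul_le_mul_of_nonneg_left e1 hN0.le,
      mul_le_mul_of_nonneg_left hab (mul_nonneg hN0.le hN1.le), sq_nonneg A,
      mul_pos hN0 hA0, mul_nonneg (mul_nonneg hN0.le hN1.le) hB0]
  have hQ0 : 0 < N * (A + (N-1) * B) := by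
    have : 0 ≤ (N-1) * B := mul_nonneg hN1.le hB0
    nlinarith
  have hfin : M ≤ 2 * Ecard := by
    have hchain : M * (N * (A + (N-1) * B)) ≤ (2 * Ecard) * (N * (A + (N-1) * B)) := by
      calc M * (N * (A + (N-1) * B)) ≤ 2 * (N * A)^2 := hkey
        _ ≤ 2 * (N * (A + (N-1) * B) * Ecard) := by nlinarith [hCS]
        _ = (2 * Ecard) * (N * (A + (N-1) * B)) := by ring
    exact le_of_mul_le_mul_right hchain hQ0
  rw [le_div_iff₀ hM0]
  linarith

lemma cs_aux {α : Type*} [Fintype α] (E : Finset α) (c : α → ℝ)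
    (hzero : ∀ f ∉ E, c f = 0) :
    (∑ f, c f)^2 ≤ (∑ f, (c f)^2) * (E.card : ℝ) := by
  have hsum_eq : ∑ f ∈ E, c f = ∑ f, c f :=
    Finset.sum_subset (Finset.subset_univ E) (fun f _ hf => hzero f hf)
  calc (∑ f, c f)^2 = (∑ f ∈ E, c f * 1)^2 := by rw [← hsum_eq]; simp
    _ ≤ (∑ f ∈ E, (c f)^2) * (∑ f ∈ E, (1:ℝ)^2) := sum_mul_sq_le_sq_mul_sq E _ _
    _ = (∑ f ∈ E, (c f)^2) * (E.card : ℝ) := by simp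
    _ ≤ (∑ f, (c f)^2) * (E.card : ℝ) := by
        refine mul_le_mul_of_nonneg_right ?_ (Nat.cast_nonneg _)
        exact Finset.sum_le_sum_of_subset_of_nonneg (Finset.subset_univ E)
          (fun f _ _ => sq_nonneg _)

lemma prob_bound {m n k d : ℕ} (hn3 : 3 ≤ n) (hk : 0 < k) (hm : m = n * k)
    (hd : (d : ℝ) < (1/10) * n * Real.log n) :
    (1:ℝ)/2 ≤ ((Finset.univ.filter
        (fun f : Fin d → Fin m =>
          ∃ j₀ : Fin n, ∀ i : Fin d, lowerMatrix m n (f i) j₀ = 0)).card : ℝ)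
      / (Fintype.card (Fin d → Fin m)) := by
  have hn : 0 < n := by omega
  have hm0 : 0 < m := by subst hm; positivity
  have hkm : k ≤ m := by subst hm; nlinarith
  have h2km : 2*k ≤ m := by subst hm; nlinarith
  have h1le : 1 ≤ n := by omega
  have hS1 := sum_X (d := d) hn hk hm
  have hS2 := sum_X_sq (d := d) hn hk hm
  have hN3 : (3:ℝ) ≤ (n:ℝ) := by exact_mod_cast hn3
  have hK0 : (0:ℝ) < (k:ℝ) := by exact_mod_cast hk
  have ha : ((m - k : ℕ) : ℝ) = ((n:ℝ) - 1) * (k:ℝ) := by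
    rw [Nat.cast_sub hkm, hm]; push_cast; ring
  have hb : ((m - 2*k : ℕ) : ℝ) = ((n:ℝ) - 2) * (k:ℝ) := by
    rw [Nat.cast_sub h2km, hm]; push_cast; ring
  have c1 : (∑ f : Fin d → Fin m,
      (((Finset.univ.filter (fun j : Fin n => ∀ i, lowerMatrix m n (f i) j = 0)).card : ℕ) : ℝ))
      = (n:ℝ) * (((n:ℝ)-1)*(k:ℝ))^d := by
    rw [← Nat.cast_sum, hS1]
    push_cast
    rw [ha]
  have c2 : (∑ f : Fin d → Fin m,
      (((Finset.univ.filter (fun j : Fin n => ∀ i, lowerMatrix m n (f i) j = 0)).card : ℕ) : ℝ)^2)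
      = (n:ℝ) * ((((n:ℝ)-1)*(k:ℝ))^d + ((n:ℝ)-1) * (((n:ℝ)-2)*(k:ℝ))^d) := by
    have hc : (∑ f : Fin d → Fin m,
        (((Finset.univ.filter (fun j : Fin n => ∀ i, lowerMatrix m n (f i) j = 0)).card : ℕ) : ℝ)^2)
        = ((∑ f : Fin d → Fin m,
          ((Finset.univ.filter (fun j : Fin n => ∀ i, lowerMatrix m n (f i) j = 0)).card)^2 : ℕ) : ℝ) := by
      push_cast; rfl
    rw [hc, hS2]
    push_cast [Nat.cast_sub h1le]
    rw [ha, hb]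
    try ring
  have hCS : ((n:ℝ) * (((n:ℝ)-1)*(k:ℝ))^d)^2
      ≤ (n:ℝ) * ((((n:ℝ)-1)*(k:ℝ))^d + ((n:ℝ)-1) * (((n:ℝ)-2)*(k:ℝ))^d)
        * (((Finset.univ.filter (fun f : Fin d → Fin m =>
            ∃ j₀ : Fin n, ∀ i : Fin d, lowerMatrix m n (f i) j₀ = 0)).card : ℕ) : ℝ) := by
    rw [← c1, ← c2]
    apply cs_aux
    intro f hf
    simp only [Finset.mem_filter, Finset.mem_univ, true_and, not_exists] at hf
    rw [Nat.cast_eq_zero, Finset.card_eq_zero, Finset.filter_eq_empty_iff]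
    intro j _
    exact hf j
  have hcard : ((Fintype.card (Fin d → Fin m)) : ℝ) = ((n:ℝ)*(k:ℝ))^d := by
    have hcf : Fintype.card (Fin d → Fin m) = m ^ d := by simp [Fintype.card_fun]
    rw [hcf, hm]
    push_cast
    ring
  rw [hcard]
  exact arith_main (n:ℝ) (k:ℝ) _ d hN3 hK0 (Nat.cast_nonneg _) hd hCS

end Prob

/-- Optimality of the sample complexity `O(r log r)`.  For `n < m`, `n ∣ m`,
the matrix `lowerMatrix m n` has orthonormal columns, `‖A‖₂ = 1`,
`‖A‖_F = √n` (so `r = n`) and `σ_{n+1}(A) = 0`.  Moreover, if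
`d < (1/10) n log n` rows are sampled independently and uniformly, then (for
`n` large) with probability at least `1/2` the sampled submatrix has a zero
column `j₀`; and whenever this happens, every projection `P` annihilating
`e_{j₀}` — in particular the orthogonal projection onto the right singular
vectors of the sample — satisfies `‖A − AP‖₂ ≥ 1`. -/
theorem sample_complexity_lower_bound :
    ∃ N : ℕ, ∀ m n : ℕ, N ≤ n → n < m → n ∣ m →
      (lowerMatrix m n).transpose * lowerMatrix m n = 1 ∧
      spec (lowerMatrix m n) = 1 ∧
      frob (lowerMatrix m n) = Real.sqrt n ∧
      singVal (lowerMatrix m n) n = 0 ∧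
      ∀ d : ℕ,
        (d : ℝ) < (1 / 10) * n * Real.log n →
        ((1 : ℝ) / 2 ≤
          ((Finset.univ.filter
              (fun f : Fin d → Fin m =>
                ∃ j₀ : Fin n, ∀ i : Fin d, lowerMatrix m n (f i) j₀ = 0)).card : ℝ)
            / (Fintype.card (Fin d → Fin m))) ∧
        ∀ (f : Fin d → Fin m) (j₀ : Fin n),
          (∀ i : Fin d, lowerMatrix m n (f i) j₀ = 0) →
          ∀ P : Matrix (Fin n) (Fin n) ℝ,
            P.mulVec (Pi.single j₀ 1) = 0 →
            1 ≤ spec (lowerMatrix m n - lowerMatrix m n * P) := by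
  refine ⟨3, fun m n hn3 hnm hdvd => ?_⟩
  have hn : 0 < n := by omega
  obtain ⟨k, hm⟩ := hdvd
  have hk : 0 < k := by
    rcases Nat.eq_zero_or_pos k with rfl | h
    · rw [mul_zero] at hm; omega
    · exact h
  have hortho := ortho hn hk hm
  refine ⟨hortho, spec_one hn hortho, frob_eq hn hk hm, singVal_n _, fun d hd => ?_⟩
  exact ⟨prob_bound hn3 hk hm hd, fun f j₀ _ P hP => spec_lb hortho j₀ P hP⟩
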